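/- (Cesàro averaging preserves asymptotic invariance to one higher order.) Let F : 𝒰 → ℂ be holomorphic on an open set 𝒰 ⊂ ℂ^{ν+1}, and let h^{(0)}, h^{(1)}, …, h^{(k)} : D_ε → ℂ^{ν+1} be holomorphic curves that all have the same derivatives up to order m at λ = 0. Define ψ(λ) = (1/k)Σ_{i=0}^{k−1} h^{(i)}(λ) and φ(λ) = (1/k)Σ_{i=1}^{k} h^{(i)}(λ). Then (1/k)Σ_{i=0}^{k−1} F(h^{(i)}_1(λ), …, h^{(i)}_ν(λ), h^{(i+1)}_{ν+1}(λ)) = F(ψ_1(λ), …, ψ_ν(λ), φ_{ν+1}(λ)) + O(λ^{m+2}) as λ → 0. -/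

import Mathlib

open Asymptotics Finset Metric

lemma aux_schwarz {f : ℂ → ℂ} {R M : ℝ} (hR : 1 < R)
    (hf : DifferentiableOn ℂ f (Metric.ball 0 R))
    (hM : ∀ t ∈ Metric.ball (0:ℂ) R, ‖f t‖ ≤ M) :
    ‖f 1 - f 0 - deriv f 0‖ ≤ 3 * (2*M+1) / R^2 := by
  have hR0 : (0:ℝ) < R := lt_trans one_pos hR
  have h0mem : (0:ℂ) ∈ Metric.ball (0:ℂ) R := mem_ball_self hR0
  have hM0 : 0 ≤ M := le_trans (norm_nonneg _) (hM 0 h0mem)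
  have h1mem : (1:ℂ) ∈ Metric.ball (0:ℂ) R := by
    simpa [mem_ball_zero_iff] using hR
  have hpos : 0 < (2*M+1)/R := by positivity
  have d1 : DifferentiableOn ℂ (dslope f 0) (Metric.ball 0 R) := by
    intro z hz
    rcases eq_or_ne z 0 with rfl | hz0
    · obtain ⟨p, hp⟩ := hf.analyticAt (isOpen_ball.mem_nhds h0mem)
      exact (hp.has_fpower_series_dslope_fslope).analyticAt.differentiableAt.differentiableWithinAt
    · exact ((differentiableAt_dslope_of_ne hz0).2
        (hf.differentiableAt (isOpen_ball.mem_nhds hz))).differentiableWithinAt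
  have maps1 : Set.MapsTo f (Metric.ball 0 R) (Metric.ball (f 0) (2*M+1)) := by
    intro t ht
    have : ‖f t - f 0‖ ≤ 2*M := by
      calc ‖f t - f 0‖ ≤ ‖f t‖ + ‖f 0‖ := norm_sub_le _ _
        _ ≤ M + M := add_le_add (hM t ht) (hM 0 h0mem)
        _ = 2*M := by ring
    simpa [mem_ball_iff_norm, dist_eq_norm] using lt_of_le_of_lt this (show 2*M < 2*M+1 by linarith)
  have s1 : ∀ z ∈ Metric.ball (0:ℂ) R, ‖dslope f 0 z‖ ≤ (2*M+1)/R :=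
    fun z hz => Complex.norm_dslope_le_div_of_mapsTo_ball hf (maps1.mono_right ball_subset_closedBall) hz
  have maps2 : Set.MapsTo (dslope f 0) (Metric.ball 0 R)
      (Metric.ball (dslope f 0 0) (3*(2*M+1)/R)) := by
    intro z hz
    have : ‖dslope f 0 z - dslope f 0 0‖ ≤ 2*((2*M+1)/R) := by
      calc ‖dslope f 0 z - dslope f 0 0‖ ≤ ‖dslope f 0 z‖ + ‖dslope f 0 0‖ := norm_sub_le _ _
        _ ≤ (2*M+1)/R + (2*M+1)/R := add_le_add (s1 z hz) (s1 0 h0mem)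
        _ = 2*((2*M+1)/R) := by ring
    have h3 : 2*((2*M+1)/R) < 3*(2*M+1)/R := by
      rw [mul_div_assoc]
      linarith
    simpa [mem_ball_iff_norm, dist_eq_norm] using lt_of_le_of_lt this h3
  have s2 : ‖dslope (dslope f 0) 0 1‖ ≤ (3*(2*M+1)/R)/R :=
    Complex.norm_dslope_le_div_of_mapsTo_ball d1 (maps2.mono_right ball_subset_closedBall) h1mem
  have hval : dslope (dslope f 0) 0 1 = f 1 - f 0 - deriv f 0 := by
    rw [dslope_of_ne _ one_ne_zero, slope_def_field, dslope_of_ne _ one_ne_zero,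
      slope_def_field, dslope_same]
    simp
  rw [hval] at s2
  calc ‖f 1 - f 0 - deriv f 0‖ ≤ (3*(2*M+1)/R)/R := s2
    _ = 3*(2*M+1)/R^2 := by rw [div_div, ← pow_two]

lemma aux_taylor {n : ℕ} {𝒰 : Set (Fin n → ℂ)} (h𝒰 : IsOpen 𝒰) {F : (Fin n → ℂ) → ℂ}
    (hF : DifferentiableOn ℂ F 𝒰) {p : Fin n → ℂ} (hp : p ∈ 𝒰) :
    ∃ δ > 0, ∃ C : ℝ, ∀ z v, z ∈ Metric.ball p δ → ‖v‖ ≤ δ →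
      ‖F (z + v) - F z - fderiv ℂ F z v‖ ≤ C * ‖v‖^2 := by
  obtain ⟨r, hr, hsub⟩ := Metric.isOpen_iff.1 h𝒰 p hp
  set δ := r/4 with hδdef
  have hδ : 0 < δ := by positivity
  have hS𝒰 : Metric.closedBall p (3*δ) ⊆ 𝒰 := by
    refine subset_trans ?_ hsub
    intro x hx
    rw [Metric.mem_closedBall] at hx
    rw [Metric.mem_ball]
    calc dist x p ≤ 3*δ := hx
      _ < r := by rw [hδdef]; linarith
  obtain ⟨M, hM⟩ := (isCompact_closedBall p (3*δ)).exists_bound_of_continuousOn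
    ((hF.continuousOn).mono hS𝒰)
  have hM0 : 0 ≤ M := le_trans (norm_nonneg _)
    (hM p (Metric.mem_closedBall_self (by positivity)))
  refine ⟨δ, hδ, 3*(2*M+1)/δ^2, fun z v hz hv => ?_⟩
  rcases eq_or_ne v 0 with rfl | hv0
  · simp
  have hvn : 0 < ‖v‖ := norm_pos_iff.2 hv0
  set R := 2*δ/‖v‖ with hRdef
  have hR : 1 < R := by
    rw [hRdef, lt_div_iff₀ hvn]
    linarith
  have hmemS : ∀ t ∈ Metric.ball (0:ℂ) R, z + t • v ∈ Metric.closedBall p (3*δ) := by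
    intro t ht
    rw [Metric.mem_ball, dist_zero_right] at ht
    rw [Metric.mem_closedBall]
    have h1 : dist (z + t • v) p ≤ dist z p + ‖t • v‖ := by
      calc dist (z + t • v) p ≤ dist (z + t • v) z + dist z p := dist_triangle _ _ _
        _ = ‖t • v‖ + dist z p := by rw [dist_eq_norm]; simp
        _ = dist z p + ‖t • v‖ := by ring
    have h2 : ‖t • v‖ ≤ 2*δ := by
      rw [norm_smul]
      calc ‖t‖ * ‖v‖ ≤ R * ‖v‖ := by
            exact mul_le_mul_of_nonneg_right ht.le (norm_nonneg _)
        _ = 2*δ := by rw [hRdef]; field_simp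
    have h3 : dist z p < δ := Metric.mem_ball.1 hz
    linarith
  have hfd : DifferentiableOn ℂ (fun t : ℂ => F (z + t • v)) (Metric.ball 0 R) := by
    intro t ht
    have hFz : DifferentiableAt ℂ F (z + t • v) :=
      hF.differentiableAt (h𝒰.mem_nhds (hS𝒰 (hmemS t ht)))
    exact (hFz.comp t ((differentiableAt_id.smul_const v).const_add z)).differentiableWithinAt
  have hfM : ∀ t ∈ Metric.ball (0:ℂ) R, ‖F (z + t • v)‖ ≤ M :=
    fun t ht => hM _ (hmemS t ht)
  have key := aux_schwarz hR hfd hfM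
  have hz𝒰 : z ∈ 𝒰 := hS𝒰 (by
    rw [Metric.mem_closedBall]
    have := Metric.mem_ball.1 hz
    linarith)
  have hdF : DifferentiableAt ℂ F z := hF.differentiableAt (h𝒰.mem_nhds hz𝒰)
  have hline : HasDerivAt (fun t : ℂ => z + t • v) v 0 := by
    have h1 : HasDerivAt (fun t : ℂ => t • v) ((1:ℂ) • v) 0 := (hasDerivAt_id 0).smul_const v
    rw [one_smul] at h1
    exact h1.const_add z
  have hcomp : HasDerivAt (fun t : ℂ => F (z + t • v)) (fderiv ℂ F z v) 0 := by
    have := HasFDerivAt.comp_hasDerivAt 0 (by simpa using hdF.hasFDerivAt) hline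
    exact this
  have hd0 : deriv (fun t : ℂ => F (z + t • v)) 0 = fderiv ℂ F z v := hcomp.deriv
  have key2 : ‖F (z + v) - F z - fderiv ℂ F z v‖ ≤ 3 * (2*M+1) / R^2 := by
    simpa [hd0] using key
  refine key2.trans ?_
  have hRsq : R^2 = 4*δ^2/‖v‖^2 := by
    rw [hRdef, div_pow]; ring_nf
  rw [hRsq]
  rw [div_div_eq_mul_div, div_le_iff₀ (by positivity)]
  have h2M : 0 ≤ 2*M+1 := by linarith
  calc 3*(2*M+1)*‖v‖^2 ≤ 3*(2*M+1)*‖v‖^2 * 4 := by nlinarith [sq_nonneg (‖v‖)]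
    _ = 3*(2*M+1)/δ^2*‖v‖^2*(4*δ^2) := by field_simp

-- norm of an update

lemma aux_norm_update {ν : ℕ} (a b : Fin (ν+1) → ℂ) :
    ‖Function.update a (Fin.last ν) (b (Fin.last ν))‖ ≤ ‖a‖ + ‖b‖ := by
  have h0 : (0:ℝ) ≤ ‖a‖ + ‖b‖ := by positivity
  rw [pi_norm_le_iff_of_nonneg h0]
  intro j
  rcases eq_or_ne j (Fin.last ν) with rfl | hj
  · rw [Function.update_self]
    calc ‖b (Fin.last ν)‖ ≤ ‖b‖ := norm_le_pi_norm b _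
      _ ≤ ‖a‖ + ‖b‖ := by linarith [norm_nonneg a]
  · rw [Function.update_of_ne hj]
    calc ‖a j‖ ≤ ‖a‖ := norm_le_pi_norm a _
      _ ≤ ‖a‖ + ‖b‖ := by linarith [norm_nonneg b]

-- update arithmetic
lemma aux_update_sub {ν : ℕ} (a b c d : Fin (ν+1) → ℂ) :
    Function.update a (Fin.last ν) (b (Fin.last ν)) -
      Function.update c (Fin.last ν) (d (Fin.last ν)) =
    Function.update (a - c) (Fin.last ν) ((b - d) (Fin.last ν)) := by
  funext j
  rcases eq_or_ne j (Fin.last ν) with rfl | hj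
  · simp
  · simp [Function.update_of_ne hj]

theorem stmt17 (ν m k : ℕ) (hk : 0 < k) (𝒰 : Set (Fin (ν + 1) → ℂ)) (h𝒰 : IsOpen 𝒰)
    (F : (Fin (ν + 1) → ℂ) → ℂ) (hF : DifferentiableOn ℂ F 𝒰)
    (ε : ℝ) (hε : 0 < ε) (h : ℕ → ℂ → (Fin (ν + 1) → ℂ))
    (hdiff : ∀ i ≤ k, DifferentiableOn ℂ (h i) (Metric.ball 0 ε))
    (hmem : ∀ i ≤ k, ∀ l ∈ Metric.ball (0 : ℂ) ε, h i l ∈ 𝒰)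
    (hjet : ∀ i ≤ k, ∀ j ≤ k,
      (fun l => h i l - h j l) =O[nhds 0] fun l : ℂ => l ^ (m + 1)) :
    (fun l : ℂ =>
        (1 / (k : ℂ)) * ∑ i ∈ Finset.range k,
            F (Function.update (h i l) (Fin.last ν) (h (i + 1) l (Fin.last ν)))
          - F (Function.update ((1 / (k : ℂ)) • ∑ i ∈ Finset.range k, h i l) (Fin.last ν)
              (((1 / (k : ℂ)) • ∑ i ∈ Finset.range k, h (i + 1) l) (Fin.last ν))))
      =O[nhds 0] fun l : ℂ => l ^ (m + 2) := by
  have hk0 : (k : ℂ) ≠ 0 := Nat.cast_ne_zero.2 hk.ne'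
  have hball : Metric.ball (0:ℂ) ε ∈ nhds (0:ℂ) := Metric.ball_mem_nhds 0 hε
  -- continuity of the curves at 0
  have hcont : ∀ i ≤ k, ContinuousAt (h i) 0 := fun i hi =>
    ((hdiff i hi).continuousOn.continuousAt hball)
  -- all curves agree at 0
  set p0 : Fin (ν+1) → ℂ := h 0 0 with hp0def
  have hval : ∀ i ≤ k, h i 0 = p0 := by
    intro i hi
    have hO := hjet i hi 0 (Nat.zero_le k)
    have htend0 : Filter.Tendsto (fun l : ℂ => l ^ (m+1)) (nhds 0) (nhds 0) := by
      simpa using (continuous_pow (m+1)).tendsto (0:ℂ)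
    have h1 : Filter.Tendsto (fun l => h i l - h 0 l) (nhds 0) (nhds 0) :=
      hO.trans_tendsto htend0
    have h2 : Filter.Tendsto (fun l => h i l - h 0 l) (nhds 0) (nhds (h i 0 - h 0 0)) :=
      ((hcont i hi).sub (hcont 0 (Nat.zero_le k))).tendsto
    have := tendsto_nhds_unique h2 h1
    rw [sub_eq_zero] at this
    exact this
  -- the modified curves
  set g : ℕ → ℂ → (Fin (ν+1) → ℂ) := fun i l =>
    Function.update (h i l) (Fin.last ν) (h (i + 1) l (Fin.last ν)) with hgdef
  set ψ : ℂ → (Fin (ν+1) → ℂ) := fun l =>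
    Function.update ((1 / (k : ℂ)) • ∑ i ∈ Finset.range k, h i l) (Fin.last ν)
      (((1 / (k : ℂ)) • ∑ i ∈ Finset.range k, h (i + 1) l) (Fin.last ν)) with hψdef
  -- ψ is the average of the g's
  have hψg : ∀ l, ψ l = (1 / (k : ℂ)) • ∑ i ∈ Finset.range k, g i l := by
    intro l
    funext j
    rcases eq_or_ne j (Fin.last ν) with rfl | hj
    · simp [hψdef, hgdef, Finset.sum_apply]
    · simp [hψdef, hgdef, Function.update_of_ne hj, Finset.sum_apply]
  -- sum of deviations vanishes
  have hsum0 : ∀ l, ∑ i ∈ Finset.range k, (g i l - ψ l) = 0 := by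
    intro l
    rw [Finset.sum_sub_distrib, Finset.sum_const, Finset.card_range, hψg,
      ← Nat.cast_smul_eq_nsmul ℂ, smul_smul]
    rw [mul_one_div, div_self hk0, one_smul, sub_self]
  -- deviations g i - g t are small
  have hgdiff : ∀ i ∈ Finset.range k, ∀ t ∈ Finset.range k,
      (fun l => g i l - g t l) =O[nhds 0] fun l : ℂ => l ^ (m + 1) := by
    intro i hi t ht
    rw [Finset.mem_range] at hi ht
    have h1 : (fun l => g i l - g t l) =O[nhds 0]
        (fun l => ‖h i l - h t l‖ + ‖h (i+1) l - h (t+1) l‖) := by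
      refine IsBigO.of_bound 1 (Filter.Eventually.of_forall fun l => ?_)
      rw [one_mul]
      have hb : ‖g i l - g t l‖ ≤ ‖h i l - h t l‖ + ‖h (i+1) l - h (t+1) l‖ := by
        rw [hgdef]
        simp only
        rw [aux_update_sub]
        exact aux_norm_update _ _
      refine hb.trans (le_of_eq ?_)
      rw [Real.norm_of_nonneg (by positivity)]
    refine h1.trans ?_
    exact ((hjet i hi.le t ht.le).norm_left.add ((hjet (i+1) hi (t+1) ht).norm_left))
  -- g i - ψ is O(l^(m+1))
  have hqO : ∀ i ∈ Finset.range k, (fun l => g i l - ψ l) =O[nhds 0]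
      fun l : ℂ => l ^ (m + 1) := by
    intro i hi
    have heq : (fun l => g i l - ψ l) =
        fun l => (1 / (k : ℂ)) • ∑ t ∈ Finset.range k, (g i l - g t l) := by
      funext l
      rw [Finset.sum_sub_distrib, Finset.sum_const, Finset.card_range, smul_sub, ← hψg,
        ← Nat.cast_smul_eq_nsmul ℂ, smul_smul, one_div, inv_mul_cancel₀ hk0, one_smul]
    rw [heq]
    refine IsBigO.congr_left
      ((IsBigO.sum fun t ht => hgdiff i hi t ht).const_smul_left ((1:ℂ)/(k:ℂ))) (fun l => ?_)
    simp [Finset.sum_apply]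
  have htend0 : Filter.Tendsto (fun l : ℂ => l ^ (m+1)) (nhds 0) (nhds 0) := by
    simpa using (continuous_pow (m+1)).tendsto (0:ℂ)
  -- g 0 tends to p0
  have hg00 : g 0 0 = p0 := by
    rw [hgdef]
    simp only
    rw [hval 0 (Nat.zero_le k), hval 1 hk, Function.update_eq_self]
  have hgcont : ContinuousAt (g 0) 0 := by
    rw [continuousAt_pi]
    intro j
    rcases eq_or_ne j (Fin.last ν) with rfl | hj
    · have : (fun l => g 0 l (Fin.last ν)) = fun l => h 1 l (Fin.last ν) := by
        funext l; rw [hgdef]; simp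
      rw [this]
      exact (continuous_apply (Fin.last ν)).continuousAt.comp (hcont 1 hk)
    · have : (fun l => g 0 l j) = fun l => h 0 l j := by
        funext l; rw [hgdef]; simp only; rw [Function.update_of_ne hj]
      rw [this]
      exact (continuous_apply j).continuousAt.comp (hcont 0 (Nat.zero_le k))
  have h0range : 0 ∈ Finset.range k := Finset.mem_range.2 hk
  have hq0tend : Filter.Tendsto (fun l => g 0 l - ψ l) (nhds 0) (nhds 0) :=
    (hqO 0 h0range).trans_tendsto htend0
  have hψtend : Filter.Tendsto ψ (nhds 0) (nhds p0) := by
    have h1 : Filter.Tendsto (fun l => g 0 l - (g 0 l - ψ l)) (nhds 0) (nhds (g 0 0 - 0)) :=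
      hgcont.tendsto.sub hq0tend
    rw [hg00, sub_zero] at h1
    refine h1.congr fun l => ?_
    abel
  -- uniform second-order Taylor bound for F near p0
  have hp0mem : p0 ∈ 𝒰 := hmem 0 (Nat.zero_le k) 0 (mem_ball_self hε)
  obtain ⟨δ, hδ, C, hC⟩ := aux_taylor h𝒰 hF hp0mem
  -- each Taylor remainder term is O(l^(m+2))
  have hT : ∀ i ∈ Finset.range k,
      (fun l => F (g i l) - F (ψ l) - (fderiv ℂ F (ψ l)) (g i l - ψ l))
        =O[nhds 0] fun l : ℂ => l ^ (m + 2) := by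
    intro i hi
    have hqtend : Filter.Tendsto (fun l => g i l - ψ l) (nhds 0) (nhds 0) :=
      (hqO i hi).trans_tendsto htend0
    have hev1 : ∀ᶠ l in nhds (0:ℂ), ψ l ∈ Metric.ball p0 δ :=
      hψtend (Metric.ball_mem_nhds p0 hδ)
    have hev2 : ∀ᶠ l in nhds (0:ℂ), ‖g i l - ψ l‖ ≤ δ := by
      have := hqtend (Metric.closedBall_mem_nhds (0 : Fin (ν+1) → ℂ) hδ)
      filter_upwards [this] with l hl
      exact mem_closedBall_zero_iff.1 hl
    have hbig : (fun l => F (g i l) - F (ψ l) - (fderiv ℂ F (ψ l)) (g i l - ψ l))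
        =O[nhds 0] fun l => ‖g i l - ψ l‖^2 := by
      refine IsBigO.of_bound C ?_
      filter_upwards [hev1, hev2] with l h1 h2
      have key := hC (ψ l) (g i l - ψ l) h1 h2
      have heq : ψ l + (g i l - ψ l) = g i l := by abel
      rw [heq] at key
      refine key.trans (le_of_eq ?_)
      rw [Real.norm_of_nonneg (by positivity)]
    refine hbig.trans ?_
    have h2 : (fun l => ‖g i l - ψ l‖^2) =O[nhds 0]
        fun l : ℂ => l^(m+1) * l^(m+1) := by
      simpa [pow_two] using ((hqO i hi).norm_left.mul (hqO i hi).norm_left)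
    refine h2.trans ?_
    have h3 : (fun l : ℂ => l^(m+1) * l^(m+1)) = fun l : ℂ => l^(m+2) * l^m := by
      funext l
      rw [← pow_add, ← pow_add]
      congr 1
      ring
    rw [h3]
    have h4 : (fun l : ℂ => l ^ m) =O[nhds 0] (fun _ : ℂ => (1:ℂ)) :=
      ((continuous_pow m).tendsto (0:ℂ)).isBigO_one ℂ
    have h5 := (isBigO_refl (fun l : ℂ => l^(m+2)) (nhds 0)).mul h4
    simpa using h5
  -- assemble
  have heqfun : (fun l : ℂ =>
        (1 / (k : ℂ)) * ∑ i ∈ Finset.range k,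
            F (Function.update (h i l) (Fin.last ν) (h (i + 1) l (Fin.last ν)))
          - F (Function.update ((1 / (k : ℂ)) • ∑ i ∈ Finset.range k, h i l) (Fin.last ν)
              (((1 / (k : ℂ)) • ∑ i ∈ Finset.range k, h (i + 1) l) (Fin.last ν)))) =
      fun l => (1 / (k : ℂ)) * ∑ i ∈ Finset.range k,
        (F (g i l) - F (ψ l) - (fderiv ℂ F (ψ l)) (g i l - ψ l)) := by
    funext l
    show (1 / (k : ℂ)) * ∑ i ∈ Finset.range k, F (g i l) - F (ψ l) = _
    have e1 : ∑ i ∈ Finset.range k,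
        (F (g i l) - F (ψ l) - (fderiv ℂ F (ψ l)) (g i l - ψ l)) =
        (∑ i ∈ Finset.range k, F (g i l)) - k * F (ψ l) := by
      rw [Finset.sum_sub_distrib, Finset.sum_sub_distrib, ← map_sum, hsum0 l, map_zero,
        sub_zero, Finset.sum_const, Finset.card_range, nsmul_eq_mul]
    rw [e1]
    field_simp
  rw [heqfun]
  refine IsBigO.congr_left ((IsBigO.sum hT).const_mul_left ((1:ℂ)/k)) (fun l => ?_)
  simp [Finset.sum_apply]
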